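/- Let β > 1 be a non-integer and fix frequency vectors p̄, p̲ ∈ [0,1]^{⌈β⌉}. If Lebesgue almost every x ∈ I_β has at least one β-expansion of frequency (p̄, p̲), then Lebesgue almost every x ∈ I_β has infinitely many distinct β-expansions of frequency (p̄, p̲). -/

import Mathlib

open MeasureTheory Filter

/-- The proportion of indices `i < n` where the digit sequence `ε` takes the value `k`. -/
noncomputable def freqCount (ε : ℕ → ℕ) (k : ℕ) (n : ℕ) : ℝ :=
  (((Finset.range n).filter (fun i => ε i = k)).card : ℝ) / n

/-- `ε` is a β-expansion of `x` (digits in `{0,…,⌊β⌋}`). -/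
def IsBetaExpansion (β x : ℝ) (ε : ℕ → ℕ) : Prop :=
  (∀ i, ε i ≤ ⌊β⌋₊) ∧ x = ∑' i : ℕ, (ε i : ℝ) / β ^ (i + 1)

/-- `ε` has upper frequencies `pbar` and lower frequencies `punder` for all digits `k ≤ m`. -/
def HasFrequency (ε : ℕ → ℕ) (m : ℕ) (pbar punder : ℕ → ℝ) : Prop :=
  ∀ k ≤ m, limsup (freqCount ε k) atTop = pbar k ∧ liminf (freqCount ε k) atTop = punder k

open Set Pointwise

namespace BetaAux

def cons (k : ℕ) (ε : ℕ → ℕ) : ℕ → ℕ := fun n => Nat.casesOn n k ε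

@[simp] lemma cons_zero (k : ℕ) (ε : ℕ → ℕ) : cons k ε 0 = k := rfl
@[simp] lemma cons_succ (k : ℕ) (ε : ℕ → ℕ) (n : ℕ) : cons k ε (n+1) = ε n := rfl

lemma cons_injective (k : ℕ) : Function.Injective (cons k) := by
  intro a b h
  funext n
  have := congrFun h (n+1)
  simpa using this

variable {β : ℝ}

lemma geom_summable (hβ : 1 < β) : Summable (fun i : ℕ => (1/β) ^ (i+1)) := by
  have hβ0 : (0:ℝ) < β := lt_trans one_pos hβ
  have : Summable (fun i : ℕ => (1/β) ^ i) := by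
    apply summable_geometric_of_lt_one (by positivity)
    rw [div_lt_one hβ0]; exact hβ
  exact (summable_nat_add_iff 1).mpr this

lemma sum_summable (hβ : 1 < β) (ε : ℕ → ℕ) (hb : ∀ i, ε i ≤ ⌊β⌋₊) :
    Summable (fun i => (ε i : ℝ) / β ^ (i + 1)) := by
  have hβ0 : (0:ℝ) < β := lt_trans one_pos hβ
  have hle : ∀ i, (ε i : ℝ) / β ^ (i + 1) ≤ (⌊β⌋₊ : ℝ) * (1/β) ^ (i+1) := by
    intro i
    rw [div_eq_mul_inv, one_div, inv_pow]
    have h1 : (ε i : ℝ) ≤ (⌊β⌋₊:ℝ) := by exact_mod_cast hb i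
    exact mul_le_mul_of_nonneg_right h1 (by positivity)
  have hnn : ∀ i, (0:ℝ) ≤ (ε i : ℝ) / β ^ (i + 1) := fun i => by positivity
  exact Summable.of_nonneg_of_le hnn hle ((geom_summable hβ).mul_left _)

lemma geom_tsum (hβ : 1 < β) : ∑' i : ℕ, (1/β) ^ (i+1) = 1/(β-1) := by
  have hβ0 : (0:ℝ) < β := lt_trans one_pos hβ
  have h1 : (1/β) < 1 := by rw [div_lt_one hβ0]; exact hβ
  have h0 : (0:ℝ) ≤ 1/β := by positivity
  have hg := tsum_geometric_of_lt_one h0 h1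
  have : ∑' i : ℕ, (1/β) ^ (i+1) = ∑' i : ℕ, (1/β) * (1/β)^i := by
    apply tsum_congr; intro i; ring
  rw [this, tsum_mul_left, hg]
  rw [show (1 - 1/β) = (β-1)/β by field_simp]
  rw [inv_div]
  field_simp

lemma val_mem_Icc (hβ : 1 < β) (ε : ℕ → ℕ) (hb : ∀ i, ε i ≤ ⌊β⌋₊) :
    (∑' i : ℕ, (ε i : ℝ) / β ^ (i + 1)) ∈ Icc (0:ℝ) ((⌊β⌋₊ : ℝ)/(β-1)) := by
  have hβ0 : (0:ℝ) < β := lt_trans one_pos hβ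
  constructor
  · apply tsum_nonneg; intro i; positivity
  · have h1 : ∑' i : ℕ, (ε i : ℝ) / β ^ (i + 1) ≤ ∑' i : ℕ, (⌊β⌋₊:ℝ) * (1/β) ^ (i+1) := by
      apply Summable.tsum_le_tsum
      · intro i
        rw [div_eq_mul_inv, one_div, inv_pow]
        exact mul_le_mul_of_nonneg_right (by exact_mod_cast hb i) (by positivity)
      · exact sum_summable hβ ε hb
      · exact ((geom_summable hβ).mul_left _)
    rw [tsum_mul_left, geom_tsum hβ] at h1
    calc _ ≤ (⌊β⌋₊:ℝ) * (1/(β-1)) := h1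
      _ = (⌊β⌋₊ : ℝ)/(β-1) := by ring

lemma val_cons (hβ : 1 < β) (k : ℕ) (ε : ℕ → ℕ) (hb : ∀ i, ε i ≤ ⌊β⌋₊) (hk : k ≤ ⌊β⌋₊) :
    ∑' i : ℕ, (cons k ε i : ℝ) / β ^ (i + 1)
      = ((∑' i : ℕ, (ε i : ℝ) / β ^ (i + 1)) + k) / β := by
  have hβ0 : (0:ℝ) < β := lt_trans one_pos hβ
  have hbc : ∀ i, cons k ε i ≤ ⌊β⌋₊ := by
    intro i; cases i with
    | zero => exact hk
    | succ n => exact hb n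
  have hsum : Summable (fun i => (cons k ε i : ℝ) / β ^ (i + 1)) := sum_summable hβ _ hbc
  rw [Summable.tsum_eq_zero_add hsum]
  have h2 : ∀ n : ℕ, (cons k ε (n+1) : ℝ) / β ^ (n+1+1) = ((ε n : ℝ) / β ^ (n+1)) * (1/β) := by
    intro n
    rw [cons_succ]
    rw [pow_succ]
    field_simp
  rw [tsum_congr h2, tsum_mul_right]
  simp only [cons_zero]
  field_simp
  ring

lemma freqCount_nonneg (ε : ℕ → ℕ) (k n : ℕ) : 0 ≤ freqCount ε k n := by
  unfold freqCount; positivity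

lemma freqCount_le_one (ε : ℕ → ℕ) (k n : ℕ) : freqCount ε k n ≤ 1 := by
  unfold freqCount
  rcases Nat.eq_zero_or_pos n with h | h
  · simp [h]
  · rw [div_le_one (by exact_mod_cast h)]
    exact_mod_cast (Finset.card_filter_le _ _).trans (by simp)

lemma card_cons (k : ℕ) (ε : ℕ → ℕ) (k' n : ℕ) :
    ((Finset.range (n+1)).filter (fun i => cons k ε i = k')).card
      = ((Finset.range n).filter (fun i => ε i = k')).card + (if k = k' then 1 else 0) := by
  rw [Finset.card_filter, Finset.card_filter, Finset.sum_range_succ']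
  simp
  rw [Finset.card_filter]
  congr

lemma freq_diff_tendsto (k : ℕ) (ε : ℕ → ℕ) (k' : ℕ) :
    Tendsto (fun n => freqCount (cons k ε) k' (n+1) - freqCount ε k' n) atTop (nhds 0) := by
  have hbound : ∀ n : ℕ, |freqCount (cons k ε) k' (n+1) - freqCount ε k' n| ≤ 2/(n+1) := by
    intro n
    set a : ℝ := (((Finset.range n).filter (fun i => ε i = k')).card : ℝ) with ha
    have han : a ≤ n := by
      rw [ha]; exact_mod_cast (Finset.card_filter_le _ _).trans (by simp)
    have ha0 : 0 ≤ a := by rw [ha]; positivity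
    set t : ℝ := (if k = k' then 1 else 0 : ℝ) with ht
    have ht0 : 0 ≤ t := by rw [ht]; split <;> norm_num
    have ht1 : t ≤ 1 := by rw [ht]; split <;> norm_num
    have hfc : freqCount (cons k ε) k' (n+1) = (a + t)/(n+1) := by
      unfold freqCount
      rw [card_cons, ha, ht]
      push_cast
      try rcases eq_or_ne k k' with hkk | hkk <;> simp [hkk]
    have hfe : freqCount ε k' n = a / n := by unfold freqCount; rw [ha]
    rw [hfc, hfe]
    rcases Nat.eq_zero_or_pos n with h | h
    · subst h
      simp only [Nat.cast_zero, div_zero, sub_zero, zero_add]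
      rw [abs_of_nonneg (by positivity)]
      rw [div_le_div_iff₀ (by norm_num) (by norm_num)]
      norm_num at han
      linarith
    · have hn : (0:ℝ) < n := by exact_mod_cast h
      have key : (a + t)/(n+1) - a/n = (n*t - a)/(n*(n+1)) := by
        field_simp
        ring
      rw [key, abs_div, abs_of_nonneg (by positivity : (0:ℝ) ≤ (n:ℝ)*(n+1))]
      rw [div_le_div_iff₀ (by positivity) (by positivity)]
      have habs : |(n:ℝ)*t - a| ≤ 2*n := by
        rw [abs_le]
        constructor <;> nlinarith
      nlinarith [habs]
  have h2 : Tendsto (fun n : ℕ => 2/((n:ℝ)+1)) atTop (nhds 0) := by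
    apply Tendsto.div_atTop tendsto_const_nhds
    exact tendsto_atTop_add_const_right _ 1 tendsto_natCast_atTop_atTop
  have hneg : Tendsto (fun n : ℕ => -(2/((n:ℝ)+1))) atTop (nhds 0) := by
    simpa using h2.neg
  apply tendsto_of_tendsto_of_tendsto_of_le_of_le hneg h2
  · intro n; have := hbound n; rw [abs_le] at this; linarith [this.1]
  · intro n; have := hbound n; rw [abs_le] at this; exact this.2

lemma limsup_liminf_eq_of_diff {u v : ℕ → ℝ} (hu0 : ∀ n, 0 ≤ u n) (hu1 : ∀ n, u n ≤ 1)
    (hv0 : ∀ n, 0 ≤ v n) (hv1 : ∀ n, v n ≤ 1)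
    (h : Tendsto (fun n => u n - v n) atTop (nhds 0)) :
    limsup u atTop = limsup v atTop ∧ liminf u atTop = liminf v atTop := by
  have hub : IsBoundedUnder (· ≤ ·) atTop u := isBoundedUnder_of ⟨1, fun n => hu1 n⟩
  have hub' : IsBoundedUnder (· ≥ ·) atTop u := isBoundedUnder_of ⟨0, fun n => hu0 n⟩
  have hvb : IsBoundedUnder (· ≤ ·) atTop v := isBoundedUnder_of ⟨1, fun n => hv1 n⟩
  have hvb' : IsBoundedUnder (· ≥ ·) atTop v := isBoundedUnder_of ⟨0, fun n => hv0 n⟩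
  have hd : Tendsto (fun n => v n - u n) atTop (nhds 0) := by simpa using h.neg
  have hdls : limsup (fun n => u n - v n) atTop = 0 := h.limsup_eq
  have hdls' : limsup (fun n => v n - u n) atTop = 0 := hd.limsup_eq
  have hdli : liminf (fun n => u n - v n) atTop = 0 := h.liminf_eq
  have hdli' : liminf (fun n => v n - u n) atTop = 0 := hd.liminf_eq
  have hequv : (v + fun n => u n - v n) = u := by funext n; simp [Pi.add_apply]
  have heqvu : (u + fun n => v n - u n) = v := by funext n; simp [Pi.add_apply]
  constructor
  · apply le_antisymm
    · have h5 := limsup_add_le (u := v) (v := fun n => u n - v n) hvb' hvb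
        (h.isBoundedUnder_ge.isCoboundedUnder_le) (h.isBoundedUnder_le)
      rw [hdls, hequv, add_zero] at h5
      exact h5
    · have h5 := limsup_add_le (u := u) (v := fun n => v n - u n) hub' hub
        (hd.isBoundedUnder_ge.isCoboundedUnder_le) (hd.isBoundedUnder_le)
      rw [hdls', heqvu, add_zero] at h5
      exact h5
  · apply le_antisymm
    · have h5 := le_liminf_add (u := u) (v := fun n => v n - u n) hub' hub
        (hd.isBoundedUnder_ge) (hd.isBoundedUnder_le.isCoboundedUnder_ge)
      rw [hdli', heqvu, add_zero] at h5
      exact h5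
    · have h5 := le_liminf_add (u := v) (v := fun n => u n - v n) hvb' hvb
        (h.isBoundedUnder_ge) (h.isBoundedUnder_le.isCoboundedUnder_ge)
      rw [hdli, hequv, add_zero] at h5
      exact h5

lemma hasFrequency_cons_iff (k : ℕ) (ε : ℕ → ℕ) (m : ℕ) (pbar punder : ℕ → ℝ) :
    HasFrequency (cons k ε) m pbar punder ↔ HasFrequency ε m pbar punder := by
  have key : ∀ k', limsup (freqCount (cons k ε) k') atTop = limsup (freqCount ε k') atTop
      ∧ liminf (freqCount (cons k ε) k') atTop = liminf (freqCount ε k') atTop := by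
    intro k'
    have h1 : limsup (freqCount (cons k ε) k') atTop
        = limsup (fun n => freqCount (cons k ε) k' (n+1)) atTop := (limsup_nat_add _ 1).symm
    have h2 : liminf (freqCount (cons k ε) k') atTop
        = liminf (fun n => freqCount (cons k ε) k' (n+1)) atTop := (liminf_nat_add _ 1).symm
    have h3 := limsup_liminf_eq_of_diff
      (fun n => freqCount_nonneg (cons k ε) k' (n+1)) (fun n => freqCount_le_one (cons k ε) k' (n+1))
      (freqCount_nonneg ε k') (freqCount_le_one ε k') (freq_diff_tendsto k ε k')
    exact ⟨h1.trans h3.1, h2.trans h3.2⟩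
  constructor <;> intro h k' hk'
  · obtain ⟨h1, h2⟩ := h k' hk'
    exact ⟨((key k').1).symm.trans h1, ((key k').2).symm.trans h2⟩
  · obtain ⟨h1, h2⟩ := h k' hk'
    exact ⟨(key k').1.trans h1, (key k').2.trans h2⟩



section Main

variable {β : ℝ} {pbar punder : ℕ → ℝ}

/-- The set of frequency expansions of `x`. -/
def Sset (β : ℝ) (pbar punder : ℕ → ℝ) (x : ℝ) : Set (ℕ → ℕ) :=
  {ε | IsBetaExpansion β x ε ∧ HasFrequency ε ⌊β⌋₊ pbar punder}

lemma mem_Sset_cons (hβ : 1 < β) {k : ℕ} (hk : k ≤ ⌊β⌋₊) {y : ℝ} {ε : ℕ → ℕ}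
    (hε : ε ∈ Sset β pbar punder y) : cons k ε ∈ Sset β pbar punder ((y + k)/β) := by
  obtain ⟨⟨hb, hval⟩, hfreq⟩ := hε
  refine ⟨⟨?_, ?_⟩, ?_⟩
  · intro i; cases i with
    | zero => exact hk
    | succ n => exact hb n
  · rw [val_cons hβ k ε hb hk, ← hval]
  · exact (hasFrequency_cons_iff k ε _ _ _).mpr hfreq

lemma Sset_tail (hβ : 1 < β) {x : ℝ} {ε : ℕ → ℕ} (hε : ε ∈ Sset β pbar punder x) :
    (fun i => ε (i+1)) ∈ Sset β pbar punder (β * x - ε 0)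
      ∧ (β * x - ε 0) ∈ Icc (0:ℝ) ((⌊β⌋₊:ℝ)/(β-1))
      ∧ x = ((β * x - ε 0) + ε 0)/β := by
  obtain ⟨⟨hb, hval⟩, hfreq⟩ := hε
  have hβ0 : (0:ℝ) < β := lt_trans one_pos hβ
  have hbt : ∀ i, (fun i => ε (i+1)) i ≤ ⌊β⌋₊ := fun i => hb _
  have hconst : cons (ε 0) (fun i => ε (i+1)) = ε := by
    funext n; cases n <;> rfl
  have hx : x = ((∑' i : ℕ, ((fun i => ε (i+1)) i : ℝ)/β^(i+1)) + ε 0)/β := by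
    rw [hval, ← hconst, val_cons hβ _ _ hbt (hb 0)]
    rw [hconst]
  have hyx : β * x - ε 0 = ∑' i : ℕ, ((fun i => ε (i+1)) i : ℝ)/β^(i+1) := by
    rw [hx]; field_simp; simp
  have hfreqt : HasFrequency (fun i => ε (i+1)) ⌊β⌋₊ pbar punder := by
    have := (hasFrequency_cons_iff (ε 0) (fun i => ε (i+1)) ⌊β⌋₊ pbar punder)
    rw [hconst] at this
    exact this.mp hfreq
  refine ⟨⟨⟨hbt, hyx⟩, hfreqt⟩, ?_, by rw [hyx, ← hx]⟩
  · rw [hyx]; exact val_mem_Icc hβ _ hbt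

/-- the inverse branch maps composed along a word -/
noncomputable def gMap (β : ℝ) (w : List ℕ) (x : ℝ) : ℝ := List.foldr (fun (d : ℕ) (t : ℝ) => (t + (d:ℝ))/β) x w

@[simp] lemma gMap_nil (x : ℝ) : gMap β [] x = x := rfl
@[simp] lemma gMap_cons (d : ℕ) (w : List ℕ) (x : ℝ) :
    gMap β (d :: w) x = (gMap β w x + d)/β := rfl
lemma gMap_append (w : List ℕ) (d : ℕ) (x : ℝ) :
    gMap β (w ++ [d]) x = gMap β w ((x + d)/β) := by
  unfold gMap; rw [List.foldr_append]; rfl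

def consW (w : List ℕ) (ε : ℕ → ℕ) : ℕ → ℕ := List.foldr cons ε w

lemma consW_injective (w : List ℕ) : Function.Injective (consW w) := by
  induction w with
  | nil => exact fun a b h => h
  | cons d w ih =>
      intro a b h
      exact ih (cons_injective d h)

lemma mem_Sset_consW (hβ : 1 < β) {w : List ℕ} (hw : ∀ d ∈ w, d ≤ ⌊β⌋₊) {y : ℝ} {ε : ℕ → ℕ}
    (hε : ε ∈ Sset β pbar punder y) : consW w ε ∈ Sset β pbar punder (gMap β w y) := by
  induction w with
  | nil => exact hε
  | cons d w ih =>
      exact mem_Sset_cons hβ (hw d (by simp)) (ih (fun d' hd' => hw d' (by simp [hd'])))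

lemma exists_word (hβ : 1 < β) {x : ℝ} {ε : ℕ → ℕ} (hε : ε ∈ Sset β pbar punder x) (n : ℕ) :
    ∃ w : List ℕ, ∃ y : ℝ, w.length = n ∧ (∀ d ∈ w, d ≤ ⌊β⌋₊) ∧
      y ∈ Icc (0:ℝ) ((⌊β⌋₊:ℝ)/(β-1)) ∧ gMap β w y = x := by
  induction n generalizing x ε with
  | zero =>
      refine ⟨[], x, rfl, by simp, ?_, rfl⟩
      obtain ⟨⟨hb, hval⟩, _⟩ := hε
      rw [hval]; exact val_mem_Icc hβ ε hb
  | succ n ih =>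
      obtain ⟨ht, hyI, hx⟩ := Sset_tail hβ hε
      obtain ⟨w, y, hlen, hw, hyI', hgy⟩ := ih ht
      refine ⟨ε 0 :: w, y, by simp [hlen], ?_, hyI', ?_⟩
      · intro d hd
        rcases List.mem_cons.mp hd with h | h
        · subst h; exact hε.1.1 0
        · exact hw d h
      · rw [gMap_cons, hgy, ← hx]

lemma gMap_affine (hβ : 1 < β) (w : List ℕ) (x : ℝ) :
    gMap β w x = x * (β⁻¹)^w.length + gMap β w 0 := by
  have hβ0 : (0:ℝ) < β := lt_trans one_pos hβ
  induction w generalizing x with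
  | nil => simp
  | cons d w ih =>
      rw [gMap_cons, gMap_cons, ih x, ih 0]
      simp only [List.length_cons]
      ring

lemma gMap_image_Icc (hβ : 1 < β) (w : List ℕ) {a b : ℝ} :
    gMap β w '' Icc a b = Icc (gMap β w a) (gMap β w b) := by
  have hβ0 : (0:ℝ) < β := lt_trans one_pos hβ
  have hs : (0:ℝ) < (β⁻¹)^w.length := by positivity
  have h1 : gMap β w '' Icc a b = (fun x => x * (β⁻¹)^w.length + gMap β w 0) '' Icc a b :=
    Set.image_congr (fun x _ => gMap_affine hβ w x)
  rw [h1]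
  have h2 : (fun x => x * (β⁻¹)^w.length + gMap β w 0)
      = (fun y => y + gMap β w 0) ∘ (fun x => x * (β⁻¹)^w.length) := rfl
  rw [h2, Set.image_comp, Set.image_mul_right_Icc' a b hs, Set.image_add_const_Icc]
  rw [gMap_affine hβ w a, gMap_affine hβ w b]

lemma gMap_image_Ioo (hβ : 1 < β) (w : List ℕ) {a b : ℝ} :
    gMap β w '' Ioo a b = Ioo (gMap β w a) (gMap β w b) := by
  have hβ0 : (0:ℝ) < β := lt_trans one_pos hβ
  have hs : (0:ℝ) < (β⁻¹)^w.length := by positivity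
  have h1 : gMap β w '' Ioo a b = (fun x => x * (β⁻¹)^w.length + gMap β w 0) '' Ioo a b :=
    Set.image_congr (fun x _ => gMap_affine hβ w x)
  rw [h1]
  have h2 : (fun x => x * (β⁻¹)^w.length + gMap β w 0)
      = (fun y => y + gMap β w 0) ∘ (fun x => x * (β⁻¹)^w.length) := rfl
  rw [h2, Set.image_comp, Set.image_mul_right_Ioo a b hs, Set.image_add_const_Ioo]
  rw [gMap_affine hβ w a, gMap_affine hβ w b]

lemma volume_image_affine (s c : ℝ) (Z : Set ℝ) :
    volume ((fun x => x * s + c) '' Z) = ENNReal.ofReal |s| * volume Z := by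
  have h2 : (fun x : ℝ => x * s + c) = (fun y => y + c) ∘ (fun x => x * s) := rfl
  rw [h2, Set.image_comp]
  have h3 : (fun x : ℝ => x * s) '' Z = s • Z := by
    rw [← Set.image_smul]
    exact Set.image_congr (fun x _ => mul_comm x s)
  have h4 : (fun y : ℝ => y + c) '' ((fun x : ℝ => x * s) '' Z)
      = (fun y : ℝ => y + (-c)) ⁻¹' ((fun x : ℝ => x * s) '' Z) := by
    ext x
    simp only [Set.mem_image, Set.mem_preimage]
    constructor
    · rintro ⟨y, hy, rfl⟩; simpa using hy
    · intro hx; exact ⟨x + -c, hx, by ring⟩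
  rw [h4, measure_preimage_add_right, h3, Measure.addHaar_smul]
  congr 1
  rw [Module.finrank_self, pow_one]

lemma gMap_image_null (hβ : 1 < β) (w : List ℕ) {Z : Set ℝ} (hZ : volume Z = 0) :
    volume (gMap β w '' Z) = 0 := by
  have h1 : gMap β w '' Z = (fun x => x * (β⁻¹)^w.length + gMap β w 0) '' Z :=
    Set.image_congr (fun x _ => gMap_affine hβ w x)
  rw [h1, volume_image_affine, hZ, mul_zero]

end Main


section MainProof

variable {β : ℝ} {pbar punder : ℕ → ℝ}

/-- `z` has an infinite, or at least `M`-element, set of frequency expansions. -/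
def GoodM (β : ℝ) (pbar punder : ℕ → ℝ) (M : ℕ) (z : ℝ) : Prop :=
  (Sset β pbar punder z).Infinite ∨
    ((Sset β pbar punder z).Finite ∧ M ≤ (Sset β pbar punder z).ncard)

lemma no_branch (hβ : 1 < β) {M : ℕ} (hM : 1 ≤ M) {x : ℝ}
    (hxfin : (Sset β pbar punder x).Finite) (hxcard : (Sset β pbar punder x).ncard = M)
    {w : List ℕ} (hw : ∀ d ∈ w, d ≤ ⌊β⌋₊) {y : ℝ} (hxy : gMap β w y = x)
    (hg1 : GoodM β pbar punder M (β*y)) (hg2 : GoodM β pbar punder M (β*y - 1)) :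
    False := by
  have hβ0 : (0:ℝ) < β := lt_trans one_pos hβ
  have hb1 : 1 ≤ ⌊β⌋₊ := Nat.le_floor (by exact_mod_cast hβ.le)
  set S1 := Sset β pbar punder (β*y) with hS1
  set S2 := Sset β pbar punder (β*y - 1) with hS2
  have h1 : ∀ ε ∈ S1, cons 0 ε ∈ Sset β pbar punder y := by
    intro ε hε
    have h := mem_Sset_cons hβ (Nat.zero_le ⌊β⌋₊) hε
    have heq : (β*y + ((0:ℕ):ℝ))/β = y := by push_cast; field_simp; ring
    rwa [heq] at h
  have h2 : ∀ ε ∈ S2, cons 1 ε ∈ Sset β pbar punder y := by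
    intro ε hε
    have h := mem_Sset_cons hβ hb1 hε
    have heq : (β*y - 1 + ((1:ℕ):ℝ))/β = y := by push_cast; field_simp; ring
    rwa [heq] at h
  have hsub : cons 0 '' S1 ∪ cons 1 '' S2 ⊆ Sset β pbar punder y := by
    apply Set.union_subset
    · rintro e ⟨ε, hε, rfl⟩; exact h1 ε hε
    · rintro e ⟨ε, hε, rfl⟩; exact h2 ε hε
  have hsubx : consW w '' (Sset β pbar punder y) ⊆ Sset β pbar punder x := by
    rintro e ⟨ε, hε, rfl⟩
    have h := mem_Sset_consW hβ hw hε
    rwa [hxy] at h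
  have hyfin : (Sset β pbar punder y).Finite := by
    by_contra hinf
    rw [← Set.not_infinite, not_not] at hinf
    exact hxfin.not_infinite
      (Set.Infinite.mono hsubx (hinf.image ((consW_injective w).injOn)))
  have h1fin : S1.Finite := by
    apply Set.Finite.of_finite_image _ ((cons_injective 0).injOn)
    exact hyfin.subset (fun e he => hsub (Set.mem_union_left _ he))
  have h2fin : S2.Finite := by
    apply Set.Finite.of_finite_image _ ((cons_injective 1).injOn)
    exact hyfin.subset (fun e he => hsub (Set.mem_union_right _ he))
  have hc1 : M ≤ S1.ncard := by
    rcases hg1 with h | h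
    · exact absurd h h1fin.not_infinite
    · exact h.2
  have hc2 : M ≤ S2.ncard := by
    rcases hg2 with h | h
    · exact absurd h h2fin.not_infinite
    · exact h.2
  have hdisj : Disjoint (cons 0 '' S1) (cons 1 '' S2) := by
    rw [Set.disjoint_left]
    rintro e ⟨ε, _, rfl⟩ ⟨ε', _, he⟩
    have h0 := congrFun he 0
    simp only [cons_zero] at h0
    exact one_ne_zero h0
  have hucard : (cons 0 '' S1 ∪ cons 1 '' S2).ncard
      = (cons 0 '' S1).ncard + (cons 1 '' S2).ncard :=
    Set.ncard_union_eq hdisj (h1fin.image _) (h2fin.image _)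
  have hcy : 2*M ≤ (Sset β pbar punder y).ncard := by
    have hle := Set.ncard_le_ncard hsub hyfin
    rw [hucard, Set.ncard_image_of_injective _ (cons_injective 0),
      Set.ncard_image_of_injective _ (cons_injective 1)] at hle
    omega
  have hcx : (Sset β pbar punder y).ncard ≤ M := by
    have hle := Set.ncard_le_ncard hsubx hxfin
    rw [Set.ncard_image_of_injective _ (consW_injective w), hxcard] at hle
    exact hle
  omega

end MainProof

end BetaAux

open BetaAux

theorem stmt3' (β : ℝ) (hβ : 1 < β)
    (pbar punder : ℕ → ℝ)
    (hae : ∀ᵐ x ∂(volume.restrict (Set.Icc 0 ((⌊β⌋₊ : ℝ) / (β - 1)))),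
      ∃ ε : ℕ → ℕ, IsBetaExpansion β x ε ∧ HasFrequency ε ⌊β⌋₊ pbar punder) :
    ∀ᵐ x ∂(volume.restrict (Set.Icc 0 ((⌊β⌋₊ : ℝ) / (β - 1)))),
      {ε : ℕ → ℕ | IsBetaExpansion β x ε ∧ HasFrequency ε ⌊β⌋₊ pbar punder}.Infinite := by
  classical
  have hβ0 : (0:ℝ) < β := lt_trans one_pos hβ
  have hβ1 : (0:ℝ) < β - 1 := by linarith
  have hb1 : 1 ≤ ⌊β⌋₊ := Nat.le_floor (by exact_mod_cast hβ.le)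
  set L : ℝ := (⌊β⌋₊ : ℝ)/(β-1) with hLdef
  have hbm : β - 1 < (⌊β⌋₊:ℝ) := by
    have h := Nat.lt_floor_add_one β
    linarith
  have hL1 : 1 < L := by rw [hLdef, lt_div_iff₀ hβ1]; linarith
  have hL0 : 0 < L := lt_trans one_pos hL1
  set I : Set ℝ := Set.Icc 0 L with hIdef
  rw [MeasureTheory.ae_iff, Measure.restrict_apply' measurableSet_Icc] at hae ⊢
  have hGnull : volume ({x : ℝ | ¬ (Sset β pbar punder x).Nonempty} ∩ I) = 0 := hae
  set Bad : Set ℝ :=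
    {x : ℝ | ¬ {ε : ℕ → ℕ | IsBetaExpansion β x ε ∧
        HasFrequency ε ⌊β⌋₊ pbar punder}.Infinite} ∩ I with hBadDef
  show volume Bad = 0
  by_contra hpos
  set B : ℕ → Set ℝ := fun m => {x : ℝ | x ∈ I ∧ (Sset β pbar punder x).Finite ∧
    (Sset β pbar punder x).Nonempty ∧ (Sset β pbar punder x).ncard = m} with hBdef
  have hcover : Bad ⊆ ({x : ℝ | ¬ (Sset β pbar punder x).Nonempty} ∩ I) ∪ ⋃ m, B m := by
    rintro x ⟨hxf, hxI⟩
    by_cases hne : (Sset β pbar punder x).Nonempty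
    · right
      refine Set.mem_iUnion.mpr ⟨(Sset β pbar punder x).ncard, hxI, ?_, hne, rfl⟩
      rw [← Set.not_infinite]
      exact hxf
    · exact Or.inl ⟨hne, hxI⟩
  have hBpos : ∃ m, 0 < volume (B m) := by
    by_contra hB
    push_neg at hB
    have h0 : volume (⋃ m, B m) = 0 :=
      measure_iUnion_null (fun m => le_antisymm (hB m) zero_le)
    have h1 : volume Bad ≤ 0 := by
      calc volume Bad
          ≤ volume (({x : ℝ | ¬ (Sset β pbar punder x).Nonempty} ∩ I) ∪ ⋃ m, B m) :=
            measure_mono hcover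
        _ ≤ volume ({x : ℝ | ¬ (Sset β pbar punder x).Nonempty} ∩ I) + volume (⋃ m, B m) :=
            measure_union_le _ _
        _ = 0 := by rw [hGnull, h0, add_zero]
    exact hpos (le_antisymm h1 zero_le)
  set M : ℕ := Nat.find hBpos with hMdef
  have hMspec : 0 < volume (B M) := Nat.find_spec hBpos
  have hB0 : B 0 = ∅ := by
    rw [Set.eq_empty_iff_forall_notMem]
    rintro x ⟨_, hfin, hne, hcard⟩
    have := (Set.ncard_pos hfin).mpr hne
    omega
  have hM1 : 1 ≤ M := by
    rcases Nat.eq_zero_or_pos M with h | h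
    · rw [h, hB0] at hMspec; simp at hMspec
    · exact h
  set Z : Set ℝ := ({x : ℝ | ¬ (Sset β pbar punder x).Nonempty} ∩ I)
      ∪ ⋃ m, ⋃ (_ : m < M), B m with hZdef
  have hZnull : volume Z = 0 := by
    apply measure_union_null hGnull
    apply measure_iUnion_null
    intro m
    apply measure_iUnion_null
    intro hm
    have hmin := Nat.find_min hBpos hm
    exact le_antisymm (not_lt.mp hmin) zero_le
  have hGood : ∀ z : ℝ, z ∈ I → z ∉ Z →
      (Sset β pbar punder z).Nonempty ∧ GoodM β pbar punder M z := by
    intro z hzI hzZ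
    have hne : (Sset β pbar punder z).Nonempty := by
      by_contra hne
      exact hzZ (Set.mem_union_left _ ⟨hne, hzI⟩)
    refine ⟨hne, ?_⟩
    by_cases hfin : (Sset β pbar punder z).Finite
    · refine Or.inr ⟨hfin, ?_⟩
      by_contra hlt
      push_neg at hlt
      exact hzZ (Set.mem_union_right _
        (Set.mem_iUnion.mpr ⟨(Sset β pbar punder z).ncard,
          Set.mem_iUnion.mpr ⟨hlt, hzI, hfin, hne, rfl⟩⟩))
    · rw [← Set.not_infinite, not_not] at hfin
      exact Or.inl hfin
  set R : Set ℝ := ⋃ w : List ℕ, gMap β w '' Z with hRdef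
  have hRnull : volume R = 0 :=
    measure_iUnion_null (fun w => gMap_image_null hβ w hZnull)
  set A : Set ℝ := B M \ R with hAdef
  have hApos : 0 < volume A := by
    rw [hAdef, measure_diff_null hRnull]
    exact hMspec
  set c : ENNReal := ENNReal.ofReal ((2*L - (L-1)/β)/(2*L)) with hcdef
  have hδ0 : 0 < (L-1)/β := by
    apply div_pos (by linarith) hβ0
  have hδle : (L-1)/β ≤ L - 1 := by
    rw [div_le_iff₀ hβ0]
    nlinarith
  have hc1 : c < 1 := by
    rw [hcdef, ← ENNReal.ofReal_one]
    rw [ENNReal.ofReal_lt_ofReal_iff_of_nonneg (by apply div_nonneg <;> linarith)]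
    rw [div_lt_one (by linarith)]
    linarith
  -- the key density estimate
  have hkey : ∀ x ∈ A, ∀ n : ℕ,
      volume (A ∩ Metric.closedBall x (L * (β⁻¹)^n)) /
        volume (Metric.closedBall x (L * (β⁻¹)^n)) ≤ c := by
    intro x hxA n
    obtain ⟨hxB, hxR⟩ := hxA
    obtain ⟨hxI, hxfin, hxne, hxcard⟩ := hxB
    obtain ⟨ε, hε⟩ := hxne
    obtain ⟨w, y, hlen, hw, hyI, hgy⟩ := exists_word hβ hε n
    set s : ℝ := (β⁻¹)^n with hsdef
    have hs0 : 0 < s := by positivity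
    have hsne : s ≠ 0 := ne_of_gt hs0
    have haff : ∀ t : ℝ, gMap β w t = t * s + gMap β w 0 := by
      intro t
      rw [gMap_affine hβ w t, hlen]
    have hgmono : ∀ a b : ℝ, a ≤ b → gMap β w a ≤ gMap β w b := by
      intro a b hab
      rw [haff a, haff b]
      have := mul_le_mul_of_nonneg_right hab hs0.le
      linarith
    have hx0 : gMap β w 0 ≤ x := by rw [← hgy]; exact hgmono 0 y hyI.1
    have hxL : x ≤ gMap β w L := by rw [← hgy]; exact hgmono y L hyI.2
    have hlen' : gMap β w L - gMap β w 0 = L * s := by rw [haff L, haff 0]; ring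
    set O' : Set ℝ := Set.Ioo (gMap β w (1/β)) (gMap β w (L/β)) with hO'def
    have hO'sub : O' ⊆ Metric.closedBall x (L*s) := by
      intro t ht
      rw [Real.closedBall_eq_Icc]
      have h1 : gMap β w 0 ≤ gMap β w (1/β) := hgmono 0 (1/β) (by positivity)
      have h2 : gMap β w (L/β) ≤ gMap β w L := by
        apply hgmono
        rw [div_le_iff₀ hβ0]
        nlinarith
      constructor
      · have := ht.1; linarith
      · have := ht.2; linarith
    have hAO : ∀ x' ∈ A, x' ∉ O' := by
      rintro x' ⟨⟨hx'I, hx'fin, hx'ne, hx'card⟩, hx'R⟩ hx'O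
      have himg : O' = gMap β w '' Set.Ioo (1/β) (L/β) := by
        rw [hO'def, gMap_image_Ioo hβ w]
      rw [himg] at hx'O
      obtain ⟨y', hy', hyx'⟩ := hx'O
      have hy'1 : 1/β < y' := hy'.1
      have hy'2 : y' < L/β := hy'.2
      have h1y : (1:ℝ) < β * y' := by
        have h := mul_lt_mul_of_pos_left hy'1 hβ0
        rwa [mul_one_div, div_self (ne_of_gt hβ0)] at h
      have hLy : β * y' < L := by
        have h := mul_lt_mul_of_pos_left hy'2 hβ0
        have he : β * (L/β) = L := by field_simp
        rwa [he] at h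
      have hz1I : β*y' ∈ I := ⟨by linarith, by linarith⟩
      have hz2I : β*y' - 1 ∈ I := ⟨by linarith, by linarith⟩
      have hz1Z : β*y' ∉ Z := by
        intro hmem
        apply hx'R
        refine Set.mem_iUnion.mpr ⟨w ++ [0], ⟨β*y', hmem, ?_⟩⟩
        rw [gMap_append, ← hyx']
        congr 1
        push_cast
        field_simp
        ring
      have hz2Z : β*y' - 1 ∉ Z := by
        intro hmem
        apply hx'R
        refine Set.mem_iUnion.mpr ⟨w ++ [1], ⟨β*y' - 1, hmem, ?_⟩⟩
        rw [gMap_append, ← hyx']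
        congr 1
        push_cast
        field_simp
        ring
      have hg1 := (hGood _ hz1I hz1Z).2
      have hg2 := (hGood _ hz2I hz2Z).2
      exact no_branch hβ hM1 hx'fin hx'card hw hyx' hg1 hg2
    have hsub2 : A ∩ Metric.closedBall x (L*s) ⊆ Metric.closedBall x (L*s) \ O' := by
      rintro t ⟨htA, htB⟩
      exact ⟨htB, hAO t htA⟩
    have hvol_cb : volume (Metric.closedBall x (L*s)) = ENNReal.ofReal (2*(L*s)) := by
      rw [Real.volume_closedBall]
    have hvol_O' : volume O' = ENNReal.ofReal ((L-1)/β * s) := by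
      rw [hO'def, Real.volume_Ioo]
      congr 1
      rw [haff (L/β), haff (1/β)]
      field_simp
      ring
    have hfinO : volume O' ≠ ⊤ := by rw [hvol_O']; exact ENNReal.ofReal_ne_top
    have hdiff : volume (Metric.closedBall x (L*s) \ O')
        = ENNReal.ofReal (2*(L*s) - (L-1)/β * s) := by
      rw [measure_diff hO'sub measurableSet_Ioo.nullMeasurableSet hfinO, hvol_cb, hvol_O',
        ← ENNReal.ofReal_sub _ (mul_nonneg hδ0.le hs0.le)]
    have hnum : volume (A ∩ Metric.closedBall x (L*s))
        ≤ ENNReal.ofReal (2*(L*s) - (L-1)/β*s) := by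
      rw [← hdiff]
      exact measure_mono hsub2
    calc volume (A ∩ Metric.closedBall x (L * (β⁻¹)^n)) /
          volume (Metric.closedBall x (L * (β⁻¹)^n))
        ≤ ENNReal.ofReal (2*(L*s) - (L-1)/β*s) / ENNReal.ofReal (2*(L*s)) := by
          rw [hvol_cb]
          exact ENNReal.div_le_div_right hnum _
      _ = c := by
          rw [← ENNReal.ofReal_div_of_pos (by positivity), hcdef]
          congr 1
          rw [div_eq_div_iff (by positivity) (by positivity)]
          ring
  -- Besicovitch density theorem: contradiction
  have hbes := Besicovitch.ae_tendsto_measure_inter_div volume A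
  have hbes0 := MeasureTheory.ae_iff.mp hbes
  have hnotT : ∀ x ∈ A, ¬ Tendsto
      (fun r => volume (A ∩ Metric.closedBall x r) / volume (Metric.closedBall x r))
      (nhdsWithin 0 (Set.Ioi 0)) (nhds 1) := by
    intro x hxA hT
    have hr0 : Tendsto (fun n : ℕ => L * (β⁻¹)^n) atTop (nhds 0) := by
      have h := tendsto_pow_atTop_nhds_zero_of_lt_one
        (by positivity : (0:ℝ) ≤ β⁻¹) (by rw [inv_lt_one_iff₀]; right; exact hβ)
      have h2 := h.const_mul L
      simpa using h2
    have hrT : Tendsto (fun n : ℕ => L * (β⁻¹)^n) atTop (nhdsWithin 0 (Set.Ioi 0)) :=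
      tendsto_nhdsWithin_of_tendsto_nhds_of_eventually_within _ hr0
        (Filter.Eventually.of_forall (fun n => Set.mem_Ioi.mpr (by positivity)))
    have hcomp := hT.comp hrT
    have hle : (1:ENNReal) ≤ c :=
      le_of_tendsto hcomp (Filter.Eventually.of_forall (fun n => hkey x hxA n))
    exact absurd hle (not_le.mpr hc1)
  have hA0 : volume A = 0 := by
    refine le_antisymm ?_ zero_le
    calc volume A
        ≤ volume ({a : ℝ | ¬ Tendsto
            (fun r => volume (A ∩ Metric.closedBall a r) / volume (Metric.closedBall a r))
            (nhdsWithin 0 (Set.Ioi 0)) (nhds 1)} ∩ A) :=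
          measure_mono (fun x hxA => ⟨hnotT x hxA, hxA⟩)
      _ ≤ (volume.restrict A) {a : ℝ | ¬ Tendsto
            (fun r => volume (A ∩ Metric.closedBall a r) / volume (Metric.closedBall a r))
            (nhdsWithin 0 (Set.Ioi 0)) (nhds 1)} := Measure.le_restrict_apply _ _
      _ = 0 := hbes0
  exact absurd hA0 (ne_of_gt hApos)

theorem stmt3 (β : ℝ) (hβ : 1 < β) (hni : ∀ n : ℕ, β ≠ n)
    (pbar punder : ℕ → ℝ)
    (hpbar : ∀ k ≤ ⌊β⌋₊, pbar k ∈ Set.Icc (0 : ℝ) 1)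
    (hpunder : ∀ k ≤ ⌊β⌋₊, punder k ∈ Set.Icc (0 : ℝ) 1)
    (hae : ∀ᵐ x ∂(volume.restrict (Set.Icc 0 ((⌊β⌋₊ : ℝ) / (β - 1)))),
      ∃ ε : ℕ → ℕ, IsBetaExpansion β x ε ∧ HasFrequency ε ⌊β⌋₊ pbar punder) :
    ∀ᵐ x ∂(volume.restrict (Set.Icc 0 ((⌊β⌋₊ : ℝ) / (β - 1)))),
      {ε : ℕ → ℕ | IsBetaExpansion β x ε ∧ HasFrequency ε ⌊β⌋₊ pbar punder}.Infinite :=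
  stmt3' β hβ pbar punder hae
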